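/- An L family of distributions is projective if and only if the marginal probability of every quantifier-free query depends only on the equality-type of the constants occurring in it. Precisely: a family (P_D) of probability distributions over L-structures on finite sets D is projective (i.e., for every injection ι : D' ↪ D and L-structure X on D', P_{D'}(X) equals the P_D-probability of extensions of ι(X)) if and only if for every quantifier-free L-formula φ(x_1,...,x_m) and any two finite sets D, D' with tuples (a_1,...,a_m) from D and (b_1,...,b_m) from D' such that a_i = a_j iff b_i = b_j for all i,j, the P_D-probability that φ(a_1,...,a_m) holds equals the P_{D'}-probability that φ(b_1,...,b_m) holds. -/

import Mathlib

open MeasureTheory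

/-- An `L`-structure on domain `D`: an interpretation of each relation symbol `R`
(of arity `ar R`) as a set of `ar R`-tuples from `D`. -/
def Struc (L : Type) (ar : L → ℕ) (D : Type) : Type :=
  ∀ R : L, (Fin (ar R) → D) → Prop

/-- `ω` (a structure on `D`) extends the image of `X` (a structure on `D'`) along the
injection `ι`; equivalently, `ι` is an embedding of structures from `X` to `ω`. -/
def ExtendsAlong {L : Type} {ar : L → ℕ} {D' D : Type} (ι : D' ↪ D)
    (X : Struc L ar D') (ω : Struc L ar D) : Prop :=
  ∀ (R : L) (s : Fin (ar R) → D'), ω R (fun i => ι (s i)) ↔ X R s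

/-- Transport of a structure along a bijection. -/
def Struc.map {L : Type} {ar : L → ℕ} {D D' : Type} (e : D ≃ D')
    (X : Struc L ar D) : Struc L ar D' :=
  fun R t => X R (fun i => e.symm (t i))

/-- The reduct of a structure to a subvocabulary `E`. -/
def reduct {L : Type} {ar : L → ℕ} (E : Set L) {D : Type} (X : Struc L ar D) :
    Struc ↥E (fun R => ar ↑R) D :=
  fun R t => X ↑R t

/-- A family of distributions indexed by all finite sets is projective if marginals
are invariant under injections. -/
def Projective {L : Type} {ar : L → ℕ}
    (P : ∀ (D : Type) [Fintype D], PMF (Struc L ar D)) : Prop :=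
  ∀ (D' D : Type) [Fintype D'] [Fintype D] (ι : D' ↪ D) (X : Struc L ar D'),
    P D' X = (P D).toOuterMeasure {ω | ExtendsAlong ι X ω}

/-- A structured (`S`-input, `T`-output) family of distributions is projective if
marginals are invariant under embeddings of input structures. -/
def ProjFam {S T : Type} {arS : S → ℕ} {arT : T → ℕ}
    (P : ∀ (D : Type) [Fintype D], Struc S arS D → PMF (Struc T arT D)) : Prop :=
  ∀ (D' D : Type) [Fintype D'] [Fintype D] (ι : D' ↪ D)
    (A' : Struc S arS D') (A : Struc S arS D), ExtendsAlong ι A' A →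
    ∀ X : Struc T arT D',
      P D' A' X = (P D A).toOuterMeasure {ω | ExtendsAlong ι X ω}
/-- Quantifier-free formulas over vocabulary `L` with variables `x_1, ..., x_m`. -/
inductive QF (L : Type) (ar : L → ℕ) (m : ℕ) : Type
  | atom (R : L) (t : Fin (ar R) → Fin m)
  | eq (i j : Fin m)
  | not (φ : QF L ar m)
  | and (φ ψ : QF L ar m)
  | or (φ ψ : QF L ar m)

/-- Satisfaction of a quantifier-free formula in a structure `ω`, with parameters `a`. -/
def QF.Sat {L : Type} {ar : L → ℕ} {m : ℕ} {D : Type}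
    (ω : Struc L ar D) (a : Fin m → D) : QF L ar m → Prop
  | .atom R t => ω R (fun i => a (t i))
  | .eq i j => a i = a j
  | .not φ => ¬ QF.Sat ω a φ
  | .and φ ψ => QF.Sat ω a φ ∧ QF.Sat ω a ψ
  | .or φ ψ => QF.Sat ω a φ ∨ QF.Sat ω a ψ

/-- All relational atoms in the formula have arity at most `k`. -/
def QF.ArityLE {L : Type} {ar : L → ℕ} {m : ℕ} (k : ℕ) : QF L ar m → Prop
  | .atom R _ => ar R ≤ k
  | .eq _ _ => True
  | .not φ => QF.ArityLE k φ
  | .and φ ψ => QF.ArityLE k φ ∧ QF.ArityLE k ψ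
  | .or φ ψ => QF.ArityLE k φ ∧ QF.ArityLE k ψ

section Aux

/-- Pull back a structure along a map. -/
def pullS {L : Type} {ar : L → ℕ} {D' D : Type} (f : D' → D) (ω : Struc L ar D) :
    Struc L ar D' := fun R s => ω R (fun i => f (s i))

lemma sat_pullS {L : Type} {ar : L → ℕ} {m : ℕ} {D' D : Type} (f : D' → D)
    (hf : Function.Injective f) (ω : Struc L ar D) (c : Fin m → D') (φ : QF L ar m) :
    QF.Sat ω (fun i => f (c i)) φ ↔ QF.Sat (pullS f ω) c φ := by
  induction φ with
  | atom R t => exact Iff.rfl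
  | eq i j => exact hf.eq_iff
  | not φ ih => exact not_congr ih
  | and φ ψ ih1 ih2 => exact and_congr ih1 ih2
  | or φ ψ ih1 ih2 => exact or_congr ih1 ih2

lemma extendsAlong_iff {L : Type} {ar : L → ℕ} {D' D : Type} (ι : D' ↪ D)
    (X : Struc L ar D') (ω : Struc L ar D) :
    ExtendsAlong ι X ω ↔ pullS ι ω = X := by
  constructor
  · intro h; funext R s; exact propext (h R s)
  · intro h R s; rw [← h]; exact Iff.rfl

lemma pmf_univ {α : Type} (p : PMF α) : p.toOuterMeasure Set.univ = 1 := by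
  rw [PMF.toOuterMeasure_apply]
  simp [PMF.tsum_coe]

lemma proj_eq {L : Type} {ar : L → ℕ}
    {P : ∀ (D : Type) [Fintype D], PMF (Struc L ar D)} (hP : Projective P)
    (D' D : Type) [Fintype D'] [Fintype D] (ι : D' ↪ D) :
    P D' = (P D).map (pullS ι) := by
  ext X
  rw [hP D' D ι X,
    show {ω | ExtendsAlong ι X ω} = pullS ι ⁻¹' {X} from
      Set.ext fun ω => extendsAlong_iff ι X ω,
    ← PMF.toOuterMeasure_map_apply, PMF.toOuterMeasure_apply_singleton]

lemma marg_eq {L : Type} {ar : L → ℕ}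
    {P : ∀ (D : Type) [Fintype D], PMF (Struc L ar D)} (hP : Projective P)
    (D' D : Type) [Fintype D'] [Fintype D] (f : D' → D) (hf : Function.Injective f)
    (S : Set (Struc L ar D')) :
    (P D).toOuterMeasure (pullS f ⁻¹' S) = (P D').toOuterMeasure S := by
  rw [proj_eq hP D' D ⟨f, hf⟩, PMF.toOuterMeasure_map_apply]
  rfl

lemma sat_foldl {L : Type} {ar : L → ℕ} {m : ℕ} {D : Type} (ω : Struc L ar D)
    (c : Fin m → D) (φ : QF L ar m) (l : List (QF L ar m)) :
    QF.Sat ω c (l.foldl QF.and φ) ↔ QF.Sat ω c φ ∧ ∀ ψ ∈ l, QF.Sat ω c ψ := by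
  induction l generalizing φ with
  | nil => simp
  | cons ψ l ih =>
      simp only [List.foldl_cons, ih, List.mem_cons]
      constructor
      · rintro ⟨⟨h1, h2⟩, h3⟩
        exact ⟨h1, fun χ hχ => hχ.elim (fun he => he ▸ h2) (h3 χ)⟩
      · rintro ⟨h1, h2⟩
        exact ⟨⟨h1, h2 ψ (Or.inl rfl)⟩, fun χ hχ => h2 χ (Or.inr hχ)⟩

end Aux

/-- a family of distributions is projective iff the marginal probability of
every quantifier-free query depends only on the equality-type of its parameters. -/
theorem stmt1 {L : Type} [Fintype L] (ar : L → ℕ)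
    (P : ∀ (D : Type) [Fintype D], PMF (Struc L ar D)) :
    Projective P ↔
      ∀ (m : ℕ) (φ : QF L ar m) (D D' : Type) [Fintype D] [Fintype D']
        (a : Fin m → D) (b : Fin m → D'),
        (∀ i j : Fin m, a i = a j ↔ b i = b j) →
        (P D).toOuterMeasure {ω | QF.Sat ω a φ} =
          (P D').toOuterMeasure {ω | QF.Sat ω b φ} := by
  constructor
  · -- projective → equality-type invariance of marginals
    intro hP m φ D D' _ _ a b hab
    classical
    let s : Setoid (Fin m) :=
      ⟨fun i j => a i = a j, ⟨fun _ => rfl, fun h => h.symm, fun h1 h2 => h1.trans h2⟩⟩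
    haveI : Fintype (Quotient s) := Fintype.ofFinite _
    let abar : Fin m → Quotient s := fun i => Quotient.mk s i
    let ιa : Quotient s → D := Quotient.lift a (fun _ _ h => h)
    let ιb : Quotient s → D' := Quotient.lift b (fun i j h => (hab i j).1 h)
    have hιa : Function.Injective ιa := by
      intro q q'
      induction q using Quotient.ind
      induction q' using Quotient.ind
      exact fun h => Quotient.sound h
    have hιb : Function.Injective ιb := by
      intro q q'
      induction q using Quotient.ind
      induction q' using Quotient.ind
      exact fun h => Quotient.sound ((hab _ _).2 h)
    have ha : {ω : Struc L ar D | QF.Sat ω a φ}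
        = pullS ιa ⁻¹' {ω | QF.Sat ω abar φ} :=
      Set.ext fun ω => sat_pullS ιa hιa ω abar φ
    have hb : {ω : Struc L ar D' | QF.Sat ω b φ}
        = pullS ιb ⁻¹' {ω | QF.Sat ω abar φ} :=
      Set.ext fun ω => sat_pullS ιb hιb ω abar φ
    rw [ha, hb, marg_eq hP _ _ ιa hιa, marg_eq hP _ _ ιb hιb]
  · -- equality-type invariance → projective
    intro h D' D _ _ ι X
    classical
    set m := Fintype.card D' with hm
    let ea : Fin m ≃ D' := (Fintype.equivFin D').symm
    let a : Fin m → D' := ea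
    by_cases hne : Nonempty (Σ R : L, (Fin (ar R) → Fin m))
    · haveI : Fintype (Σ R : L, (Fin (ar R) → Fin m)) := Fintype.ofFinite _
      obtain ⟨p0⟩ := hne
      let clause : (Σ R : L, (Fin (ar R) → Fin m)) → QF L ar m := fun p =>
        if X p.1 (fun i => a (p.2 i)) then QF.atom p.1 p.2 else QF.not (QF.atom p.1 p.2)
      have sat_clause : ∀ {E : Type} (ω : Struc L ar E) (c : Fin m → E)
          (p : Σ R : L, (Fin (ar R) → Fin m)),
          QF.Sat ω c (clause p) ↔
            (ω p.1 (fun i => c (p.2 i)) ↔ X p.1 (fun i => a (p.2 i))) := by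
        intro E ω c p
        show QF.Sat ω c (if X p.1 (fun i => a (p.2 i)) then QF.atom p.1 p.2
          else QF.not (QF.atom p.1 p.2)) ↔ _
        split_ifs with hX
        · simp [QF.Sat, hX]
        · simp [QF.Sat, hX]
      let lst := (Finset.univ : Finset (Σ R : L, (Fin (ar R) → Fin m))).toList
      let φX := (lst.map clause).foldl QF.and (clause p0)
      have satφX : ∀ {E : Type} (ω : Struc L ar E) (c : Fin m → E),
          QF.Sat ω c φX ↔ ∀ p : (Σ R : L, (Fin (ar R) → Fin m)),
            (ω p.1 (fun i => c (p.2 i)) ↔ X p.1 (fun i => a (p.2 i))) := by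
        intro E ω c
        show QF.Sat ω c ((lst.map clause).foldl QF.and (clause p0)) ↔ _
        rw [sat_foldl]
        constructor
        · rintro ⟨_, hl⟩ p
          exact (sat_clause ω c p).1 (hl (clause p)
            (List.mem_map_of_mem (f := clause) (Finset.mem_toList.2 (Finset.mem_univ p))))
        · intro hp
          refine ⟨(sat_clause ω c p0).2 (hp p0), ?_⟩
          intro ψ hψ
          obtain ⟨p, _, rfl⟩ := List.mem_map.1 hψ
          exact (sat_clause ω c p).2 (hp p)
      have key := h m φX D' D a (fun i => ι (a i))
        (fun i j => ⟨fun hij => congrArg ι hij, fun hij => ι.injective hij⟩)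
      have hset1 : {ω : Struc L ar D' | QF.Sat ω a φX} = {X} := by
        ext ω
        simp only [Set.mem_setOf_eq, Set.mem_singleton_iff, satφX]
        constructor
        · intro h'
          funext R sv
          have hthis := h' ⟨R, fun i => ea.symm (sv i)⟩
          have hs : (fun i => a (ea.symm (sv i))) = sv :=
            funext fun i => ea.apply_symm_apply (sv i)
          rw [hs] at hthis
          exact propext hthis
        · rintro rfl
          exact fun _ => Iff.rfl
      have hset2 : {ω : Struc L ar D | QF.Sat ω (fun i => ι (a i)) φX}
          = {ω | ExtendsAlong ι X ω} := by
        ext ω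
        simp only [Set.mem_setOf_eq, satφX]
        constructor
        · intro h' R sv
          have hthis := h' ⟨R, fun i => ea.symm (sv i)⟩
          have hs : (fun i => a (ea.symm (sv i))) = sv :=
            funext fun i => ea.apply_symm_apply (sv i)
          have hs2 : (fun i => ι (a (ea.symm (sv i)))) = (fun i => ι (sv i)) :=
            funext fun i => congrArg ι (ea.apply_symm_apply (sv i))
          rw [hs2, hs] at hthis
          exact hthis
        · intro h' p
          exact h' p.1 (fun i => a (p.2 i))
      calc P D' X = (P D').toOuterMeasure {X} :=
              (PMF.toOuterMeasure_apply_singleton _ _).symm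
        _ = (P D').toOuterMeasure {ω | QF.Sat ω a φX} := by rw [hset1]
        _ = (P D).toOuterMeasure {ω | QF.Sat ω (fun i => ι (a i)) φX} := key
        _ = (P D).toOuterMeasure {ω | ExtendsAlong ι X ω} := by rw [hset2]
    · have hD' : ∀ (R : L) (sv : Fin (ar R) → D'), False := fun R sv =>
        hne ⟨⟨R, fun i => ea.symm (sv i)⟩⟩
      have hsub : ∀ Y : Struc L ar D', Y = X := fun Y =>
        funext fun R => funext fun sv => (hD' R sv).elim
      have hx : ({X} : Set (Struc L ar D')) = Set.univ :=
        Set.eq_univ_of_forall fun Y => hsub Y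
      have hext : {ω : Struc L ar D | ExtendsAlong ι X ω} = Set.univ :=
        Set.eq_univ_of_forall fun ω R sv => (hD' R sv).elim
      rw [hext, pmf_univ, ← PMF.toOuterMeasure_apply_singleton, hx, pmf_univ]
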